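/- Let $n \ge 1$ and let $X_1, X_2$ be independent random variables, each uniformly distributed on $\Delta^{n,u}$. Then the probability that $X_1$ and $X_2$ are comparable with respect to monotone likelihood ratio dominance (i.e., $X_1 \le_r X_2$ or $X_2 \le_r X_1$) equals $\frac{2}{(n+1)!}$. -/

import Mathlib

open MeasureTheory Finset ENNReal NNReal Set

variable {n : ℕ}

local notation "E" n => EuclideanSpace ℝ (Fin (n+1))

lemma dimH_submodule_le (V : Submodule ℝ (E n)) :
    dimH (V : Set (E n)) ≤ (Module.finrank ℝ V : ℝ≥0∞) := by
  have h1 : (V : Set (E n)) = Set.range ((↑) : V → E n) := (Subtype.range_coe).symm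
  rw [h1, ← Set.image_univ, isometry_subtype_coe.dimH_image, Real.dimH_univ_eq_finrank]

lemma hyperplane_null (f g : (E n) →ₗ[ℝ] ℝ) (c d : ℝ) (w₁ w₂ : E n)
    (hdet : f w₁ * g w₂ - f w₂ * g w₁ ≠ 0) (hn : 1 ≤ n) :
    μH[(n : ℝ)] {y : E n | f y = c ∧ g y = d} = 0 := by
  set Z := {y : E n | f y = c ∧ g y = d} with hZ
  rcases Z.eq_empty_or_nonempty with h | ⟨p, hp⟩
  · simp [h]
  set F : (E n) →ₗ[ℝ] ℝ × ℝ := f.prod g with hF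
  -- surjectivity
  have hsurj : Function.Surjective F := by
    rintro ⟨a, b⟩
    set det := f w₁ * g w₂ - f w₂ * g w₁ with hdet'
    refine ⟨((a * g w₂ - b * f w₂)/det) • w₁ + ((b * f w₁ - a * g w₁)/det) • w₂, ?_⟩
    have : F (((a * g w₂ - b * f w₂)/det) • w₁ + ((b * f w₁ - a * g w₁)/det) • w₂)
        = (((a * g w₂ - b * f w₂)/det) * f w₁ + ((b * f w₁ - a * g w₁)/det) * f w₂,
           ((a * g w₂ - b * f w₂)/det) * g w₁ + ((b * f w₁ - a * g w₁)/det) * g w₂) := by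
      simp [hF, LinearMap.prod_apply, map_add, _root_.map_smul, smul_eq_mul, Prod.ext_iff]
    rw [this, Prod.ext_iff]
    constructor <;> · field_simp; ring
  -- rank of kernel
  have hrank : Module.finrank ℝ (LinearMap.ker F) = n - 1 := by
    have h1 := LinearMap.finrank_range_add_finrank_ker F
    rw [LinearMap.range_eq_top.2 hsurj] at h1
    have h2 : Module.finrank ℝ (⊤ : Submodule ℝ (ℝ × ℝ)) = 2 := by
      simp [finrank_top]
    rw [h2, finrank_euclideanSpace_fin] at h1
    omega
  -- Z is a translate of ker F
  have hZ2 : Z = (fun v => p + v) '' ((LinearMap.ker F : Set (E n))) := by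
    ext y
    simp only [Set.mem_image, SetLike.mem_coe, LinearMap.mem_ker]
    constructor
    · intro hy
      refine ⟨y - p, ?_, by abel⟩
      have hyp : F y = F p := by
        have h1 : f y = c := hy.1
        have h2 : g y = d := hy.2
        simp [hF, LinearMap.prod_apply, Prod.ext_iff, h1, h2, hp.1, hp.2]
      rw [map_sub, hyp, sub_self]
    · rintro ⟨v, hv, rfl⟩
      have : F (p + v) = F p := by rw [map_add, hv, add_zero]
      have hp1 : f p = c := hp.1
      have hp2 : g p = d := hp.2
      constructor
      · have := congrArg Prod.fst this; simpa [hF, hp1] using this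
      · have := congrArg Prod.snd this; simpa [hF, hp2] using this
  -- dimension bound
  have hdim : dimH Z ≤ ((n - 1 : ℕ) : ℝ≥0∞) := by
    rw [hZ2]
    have himg : (fun v => p + v) '' ((LinearMap.ker F : Set (E n)))
        = (IsometryEquiv.constVAdd (p : E n)) '' ((LinearMap.ker F : Set (E n))) := rfl
    rw [himg, IsometryEquiv.dimH_image]
    rw [← hrank]
    exact dimH_submodule_le _
  have hlt : dimH Z < ((n : ℝ≥0) : ℝ≥0∞) := by
    refine hdim.trans_lt ?_
    have : ((n - 1 : ℕ) : ℝ≥0∞) < ((n : ℕ) : ℝ≥0∞) := by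
      exact_mod_cast Nat.sub_lt (by omega) one_pos
    simpa using this
  have h0 : μH[((n : ℝ≥0) : ℝ)] Z = 0 := hausdorffMeasure_of_dimH_lt hlt
  simpa using h0

variable {n : ℕ}


section maps
variable (n)

def Pmap : (E n) →ₗ[ℝ] (Fin n → ℝ) where
  toFun x := fun i => x i.castSucc
  map_add' x y := by funext i; simp [PiLp.add_apply]
  map_smul' c x := by funext i; simp [PiLp.smul_apply]

def Jlin : (Fin n → ℝ) →ₗ[ℝ] (E n) where
  toFun y := WithLp.toLp 2 (Fin.snoc y (-(∑ i, y i)))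
  map_add' x y := by
    ext k
    change (Fin.snoc (x + y) (-(∑ i, (x + y) i)) : Fin (n+1) → ℝ) k
      = (Fin.snoc x (-(∑ i, x i)) : Fin (n+1) → ℝ) k + (Fin.snoc y (-(∑ i, y i)) : Fin (n+1) → ℝ) k
    refine Fin.lastCases ?_ (fun i => ?_) k
    · simp [Fin.snoc_last, Finset.sum_add_distrib]; ring
    · simp [Fin.snoc_castSucc]
  map_smul' c x := by
    ext k
    change (Fin.snoc (c • x) (-(∑ i, (c • x) i)) : Fin (n+1) → ℝ) k = c • (Fin.snoc x (-(∑ i, x i)) : Fin (n+1) → ℝ) k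
    refine Fin.lastCases ?_ (fun i => ?_) k
    · simp [Fin.snoc_last, Finset.mul_sum]
    · simp [Fin.snoc_castSucc]

def Jmap (u : ℝ) : (Fin n → ℝ) → (E n) := fun y => Jlin n y + (show E n from WithLp.toLp 2 (Fin.snoc (0 : Fin n → ℝ) u : Fin (n+1) → ℝ))

lemma Jmap_apply_castSucc (u : ℝ) (y : Fin n → ℝ) (i : Fin n) :
    Jmap n u y i.castSucc = y i := by
  change (Fin.snoc y (-(∑ i, y i)) : Fin (n+1) → ℝ) i.castSucc + (Fin.snoc (0 : Fin n → ℝ) u : Fin (n+1) → ℝ) i.castSucc = y i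
  simp [Fin.snoc_castSucc]

lemma Jmap_apply_last (u : ℝ) (y : Fin n → ℝ) :
    Jmap n u y (Fin.last n) = u - ∑ i, y i := by
  change (Fin.snoc y (-(∑ i, y i)) : Fin (n+1) → ℝ) (Fin.last n) + (Fin.snoc (0 : Fin n → ℝ) u : Fin (n+1) → ℝ) (Fin.last n)
      = u - ∑ i, y i
  simp [Fin.snoc_last]; ring

end maps

lemma simplex_measure_pos_ne_top (u : ℝ) (hu : 0 < u) :
    0 < μH[(n : ℝ)] {x : E n | (∀ i, 0 ≤ x i) ∧ ∑ i, x i = u} ∧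
    μH[(n : ℝ)] {x : E n | (∀ i, 0 ≤ x i) ∧ ∑ i, x i = u} ≠ ∞ := by
  set S := {x : E n | (∀ i, 0 ≤ x i) ∧ ∑ i, x i = u} with hS
  set Tn := {y : Fin n → ℝ | (∀ i, 0 ≤ y i) ∧ ∑ i, y i ≤ u} with hTn
  -- Hausdorff measure on (Fin n → ℝ) is Lebesgue
  have hH : (μH[(n : ℝ)] : Measure (Fin n → ℝ)) = volume := by
    simpa using (hausdorffMeasure_pi_real (ι := Fin n))
  -- S = J '' Tn and P '' S = Tn
  have hJS : ∀ y ∈ Tn, Jmap n u y ∈ S := by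
    intro y hy
    constructor
    · intro k
      refine Fin.lastCases ?_ (fun i => ?_) k
      · rw [Jmap_apply_last]; linarith [hy.2]
      · rw [Jmap_apply_castSucc]; exact hy.1 i
    · rw [Fin.sum_univ_castSucc]
      simp only [Jmap_apply_castSucc, Jmap_apply_last]
      ring
  have hPS : ∀ x ∈ S, Pmap n x ∈ Tn ∧ Jmap n u (Pmap n x) = x := by
    intro x hx
    have hsum : ∑ i : Fin n, x i.castSucc = u - x (Fin.last n) := by
      have := hx.2
      rw [Fin.sum_univ_castSucc] at this
      linarith
    refine ⟨⟨fun i => hx.1 _, ?_⟩, ?_⟩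
    · show ∑ i : Fin n, x i.castSucc ≤ u
      rw [hsum]; linarith [hx.1 (Fin.last n)]
    · ext k
      refine Fin.lastCases ?_ (fun i => ?_) k
      · rw [Jmap_apply_last]
        show u - ∑ i : Fin n, x i.castSucc = x (Fin.last n)
        rw [hsum]; ring
      · rw [Jmap_apply_castSucc]; rfl
  have hSeq : S = Jmap n u '' Tn := by
    ext x
    constructor
    · intro hx
      exact ⟨Pmap n x, (hPS x hx).1, (hPS x hx).2⟩
    · rintro ⟨y, hy, rfl⟩
      exact hJS y hy
  have hTeq : Pmap n '' S = Tn := by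
    apply Set.Subset.antisymm
    · rintro _ ⟨x, hx, rfl⟩
      exact (hPS x hx).1
    · intro y hy
      refine ⟨Jmap n u y, hJS y hy, ?_⟩
      funext i
      rw [show (Pmap n) (Jmap n u y) i = Jmap n u y i.castSucc from rfl, Jmap_apply_castSucc]
  -- Lipschitz constants
  have hPcont : Continuous (Pmap n) := (Pmap n).continuous_of_finiteDimensional
  have hJcont : Continuous (Jlin n) := (Jlin n).continuous_of_finiteDimensional
  set KP := ‖LinearMap.toContinuousLinearMap (Pmap n)‖₊ with hKP
  have LipP : LipschitzWith KP (Pmap n) := (LinearMap.toContinuousLinearMap (Pmap n)).lipschitz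
  set KJ := ‖LinearMap.toContinuousLinearMap (Jlin n)‖₊ with hKJ
  have LipJ : LipschitzWith KJ (Jmap n u) := by
    intro y y'
    have := (LinearMap.toContinuousLinearMap (Jlin n)).lipschitz y y'
    simpa [Jmap, edist_add_right] using this
  -- volume bounds on Tn
  have hvol_pos : 0 < volume Tn := by
    have hb : (0:ℝ) < u / (n+1) := by positivity
    have hsub : (Set.pi Set.univ fun _ : Fin n => Set.Icc (0:ℝ) (u/(n+1))) ⊆ Tn := by
      intro y hy
      simp only [Set.mem_pi, Set.mem_univ, forall_true_left, Set.mem_Icc] at hy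
      refine ⟨fun i => (hy i).1, ?_⟩
      calc ∑ i, y i ≤ ∑ _i : Fin n, u/(n+1) :=
            Finset.sum_le_sum fun i _ => (hy i).2
        _ = n * (u/(n+1)) := by simp [mul_comm]
        _ ≤ u := by
            rw [← mul_div_assoc, div_le_iff₀ (by positivity)]
            linarith
    refine lt_of_lt_of_le ?_ (measure_mono hsub)
    rw [volume_pi_pi]
    simp only [Real.volume_Icc, sub_zero]
    rw [Finset.prod_const]
    exact ENNReal.pow_pos (by simp [hb]) _
  have hvol_fin : volume Tn < ∞ := by
    have hsub : Tn ⊆ Set.pi Set.univ fun _ : Fin n => Set.Icc (0:ℝ) u := by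
      intro y hy
      simp only [Set.mem_pi, Set.mem_univ, forall_true_left, Set.mem_Icc]
      intro i
      refine ⟨hy.1 i, ?_⟩
      calc y i ≤ ∑ j, y j := Finset.single_le_sum (fun j _ => hy.1 j) (Finset.mem_univ i)
        _ ≤ u := hy.2
    refine lt_of_le_of_lt (measure_mono hsub) ?_
    rw [volume_pi_pi]
    simp only [Real.volume_Icc, sub_zero, Finset.prod_const]
    exact ENNReal.pow_lt_top ENNReal.ofReal_lt_top
  constructor
  · by_contra h
    push_neg at h
    have h0 : μH[(n : ℝ)] S = 0 := le_antisymm h zero_le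
    have := LipP.hausdorffMeasure_image_le (by positivity : (0:ℝ) ≤ n) S
    rw [hTeq, h0, mul_zero, hH] at this
    exact absurd (le_antisymm this zero_le) hvol_pos.ne'
  · have := LipJ.hausdorffMeasure_image_le (by positivity : (0:ℝ) ≤ n) Tn
    rw [← hSeq, hH] at this
    refine (this.trans_lt ?_).ne
    exact ENNReal.mul_lt_top (ENNReal.rpow_lt_top_of_nonneg (by positivity) ENNReal.coe_ne_top) hvol_fin

lemma sort_exists {m : ℕ} (r : Fin m → ℝ) (hr : Function.Injective r) :
    ∃ σ : Equiv.Perm (Fin m), StrictMono (r ∘ σ) :=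
  ⟨Tuple.sort r, (Tuple.monotone_sort r).strictMono_of_injective
    (hr.comp (Tuple.sort r).injective)⟩

lemma sort_unique {m : ℕ} (r : Fin m → ℝ) (hr : Function.Injective r)
    (σ τ : Equiv.Perm (Fin m)) (hσ : StrictMono (r ∘ σ)) (hτ : StrictMono (r ∘ τ)) :
    σ = τ := by
  have hcard : (Finset.image r Finset.univ).card = m := by
    rw [Finset.card_image_of_injective _ hr, Finset.card_univ, Fintype.card_fin]
  have h1 := Finset.orderEmbOfFin_unique hcard
    (f := r ∘ σ) (fun x => Finset.mem_image_of_mem r (Finset.mem_univ _)) hσ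
  have h2 := Finset.orderEmbOfFin_unique hcard
    (f := r ∘ τ) (fun x => Finset.mem_image_of_mem r (Finset.mem_univ _)) hτ
  ext k
  have : r (σ k) = r (τ k) := by
    have := congrFun (h1.trans h2.symm) k
    simpa using this
  exact Fin.val_eq_of_eq (hr this)

section perm
variable {n : ℕ}

noncomputable def permIso (τ : Equiv.Perm (Fin (n+1))) : (E n) ≃ₗᵢ[ℝ] (E n) :=
  LinearIsometryEquiv.piLpCongrLeft 2 ℝ ℝ τ

lemma permIso_apply (τ : Equiv.Perm (Fin (n+1))) (x : E n) (i : Fin (n+1)) :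
    permIso τ x i = x (τ.symm i) := rfl

lemma permIso_measurePreserving (τ : Equiv.Perm (Fin (n+1)))
    (u : ℝ) (S : Set (E n)) (hS : S = {x : E n | (∀ i, 0 ≤ x i) ∧ ∑ i, x i = u})
    (hSm : MeasurableSet S)
    (μ : Measure (E n)) (hμ : μ = (μH[(n : ℝ)] S)⁻¹ • (μH[(n : ℝ)]).restrict S) :
    MeasurePreserving (permIso τ) μ μ := by
  have hisom : Isometry (permIso τ) := (permIso τ).isometry
  have hmeas : Measurable (permIso τ) := (permIso τ).continuous.measurable
  have hpre : (permIso τ) ⁻¹' S = S := by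
    ext x
    simp only [Set.mem_preimage, hS, Set.mem_setOf_eq]
    constructor
    · rintro ⟨h1, h2⟩
      refine ⟨fun i => ?_, ?_⟩
      · have := h1 (τ i)
        rw [permIso_apply, Equiv.symm_apply_apply] at this
        exact this
      rw [← h2]
      rw [← Equiv.sum_comp τ.symm (fun i => x i)]
      exact Finset.sum_congr rfl fun i _ => (permIso_apply τ x i).symm
    · rintro ⟨h1, h2⟩
      refine ⟨fun i => by rw [permIso_apply]; exact h1 _, ?_⟩
      rw [← h2]
      rw [← Equiv.sum_comp τ.symm (fun i => x i)]
      exact Finset.sum_congr rfl fun i _ => permIso_apply τ x i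
  refine ⟨hmeas, ?_⟩
  rw [hμ, Measure.map_smul]
  congr 1
  ext A hA
  rw [Measure.map_apply hmeas hA, Measure.restrict_apply hA,
    Measure.restrict_apply (hmeas hA)]
  have : (permIso τ) ⁻¹' A ∩ S = (permIso τ) ⁻¹' (A ∩ S) := by
    rw [Set.preimage_inter, hpre]
  rw [this]
  have hIE : μH[(n : ℝ)] ((permIso τ).toIsometryEquiv ⁻¹' (A ∩ S)) = μH[(n : ℝ)] (A ∩ S) :=
    IsometryEquiv.hausdorffMeasure_preimage ((permIso τ).toIsometryEquiv) _ _
  exact hIE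
set_option maxHeartbeats 1000000 in
/-- The probability that two independent uniform points on the
`n`-probability simplex are comparable with respect to monotone likelihood
ratio dominance is `2/(n+1)!`. -/
theorem prob_mlr_comparable (n : ℕ) (hn : 1 ≤ n) (u : ℝ) (hu : 0 < u)
    (S : Set (EuclideanSpace ℝ (Fin (n + 1))))
    (hS : S = {x | (∀ i, 0 ≤ x i) ∧ ∑ i, x i = u})
    (μ : Measure (EuclideanSpace ℝ (Fin (n + 1))))
    (hμ : μ = (μH[(n : ℝ)] S)⁻¹ • (μH[(n : ℝ)]).restrict S) :
    (μ.prod μ) {p : EuclideanSpace ℝ (Fin (n + 1)) × EuclideanSpace ℝ (Fin (n + 1)) |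
        (∀ i j : Fin (n + 1), i < j → p.2 i * p.1 j ≤ p.1 i * p.2 j) ∨
        (∀ i j : Fin (n + 1), i < j → p.1 i * p.2 j ≤ p.2 i * p.1 j)}
      = 2 / ((n + 1).factorial : ℝ≥0∞) := by
  -- coordinate functions
  have hcont : ∀ i, Continuous fun x : E n => x i :=
    fun i => (EuclideanSpace.proj (𝕜 := ℝ) i).continuous
  have hmeas : ∀ i, Measurable fun x : E n => x i := fun i => (hcont i).measurable
  -- S is measurable
  have hSm : MeasurableSet S := by
    rw [hS]
    have h1 : IsClosed {x : E n | ∀ i, 0 ≤ x i} := by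
      have : {x : E n | ∀ i, 0 ≤ x i} = ⋂ i, {x : E n | 0 ≤ x i} := by
        ext x; simp
      rw [this]
      exact isClosed_iInter fun i => isClosed_le continuous_const (hcont i)
    have h2 : IsClosed {x : E n | ∑ i, x i = u} :=
      isClosed_eq (continuous_finset_sum _ fun i _ => hcont i) continuous_const
    exact (h1.inter h2).measurableSet
  -- Hausdorff measure of S
  obtain ⟨hc0, hcT⟩ : 0 < μH[(n : ℝ)] S ∧ μH[(n : ℝ)] S ≠ ∞ := by
    rw [hS]; exact simplex_measure_pos_ne_top u hu
  -- μ is a probability measure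
  haveI : IsProbabilityMeasure μ := by
    constructor
    rw [hμ, Measure.smul_apply, Measure.restrict_apply_univ, smul_eq_mul]
    exact ENNReal.inv_mul_cancel hc0.ne' hcT
  set ν := μ.prod μ with hν
  haveI : IsProbabilityMeasure ν := by rw [hν]; infer_instance
  -- μ of a measurable set
  have hμapp : ∀ A : Set (E n), MeasurableSet A →
      μ A = (μH[(n : ℝ)] S)⁻¹ * μH[(n : ℝ)] (A ∩ S) := by
    intro A hA
    rw [hμ, Measure.smul_apply, Measure.restrict_apply hA, smul_eq_mul]
  -- the sum functional
  set fsum : (E n) →ₗ[ℝ] ℝ := ∑ j, EuclideanSpace.projₗ (𝕜 := ℝ) j with hfsum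
  have hfsum_apply : ∀ x : E n, fsum x = ∑ j, x j := by
    intro x
    rw [hfsum, LinearMap.sum_apply]
    rfl
  have hproj_apply : ∀ (i) (x : E n), EuclideanSpace.projₗ (𝕜 := ℝ) i x = x i := fun _ _ => rfl
  -- null sets in E
  have hcompl : μ Sᶜ = 0 := by
    rw [hμapp _ hSm.compl, Set.compl_inter_self, measure_empty, mul_zero]
  have hface : ∀ i, μ {x : E n | x i = 0} = 0 := by
    intro i
    have hA : MeasurableSet {x : E n | x i = 0} :=
      measurableSet_eq_fun (hmeas i) measurable_const
    rw [hμapp _ hA]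
    obtain ⟨j, hj⟩ : ∃ j : Fin (n+1), j ≠ i := by
      by_cases h : i = ⟨0, by omega⟩
      · exact ⟨⟨1, by omega⟩, by simp [h, Fin.ext_iff]⟩
      · exact ⟨⟨0, by omega⟩, fun hc => h hc.symm⟩
    have hZ : μH[(n : ℝ)] {y : E n | fsum y = u ∧ EuclideanSpace.projₗ (𝕜 := ℝ) i y = 0} = 0 := by
      apply hyperplane_null _ _ _ _ (EuclideanSpace.single i 1) (EuclideanSpace.single j 1) _ hn
      rw [hfsum_apply, hfsum_apply, hproj_apply, hproj_apply]
      simp [EuclideanSpace.single_apply, Finset.sum_ite_eq', hj, Ne.symm hj]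
    have hsub : {x : E n | x i = 0} ∩ S ⊆
        {y : E n | fsum y = u ∧ EuclideanSpace.projₗ (𝕜 := ℝ) i y = 0} := by
      rintro x ⟨hx1, hx2⟩
      rw [hS] at hx2
      exact ⟨by rw [hfsum_apply]; exact hx2.2, by rw [hproj_apply]; exact hx1⟩
    rw [le_antisymm ((measure_mono hsub).trans hZ.le) zero_le, mul_zero]
  -- the bad set N in E
  set N : Set (E n) := Sᶜ ∪ ⋃ i, {x : E n | x i = 0} with hN
  have hNm : MeasurableSet N :=
    hSm.compl.union (MeasurableSet.iUnion fun i =>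
      measurableSet_eq_fun (hmeas i) measurable_const)
  have hN0 : μ N = 0 := by
    apply measure_union_null hcompl
    exact measure_iUnion_null fun i => hface i
  have hNpos : ∀ x : E n, x ∉ N → ∀ i, 0 < x i := by
    intro x hx i
    simp only [hN, Set.mem_union, Set.mem_iUnion, not_or, not_exists, Set.mem_compl_iff,
      not_not, Set.mem_setOf_eq] at hx
    rcases hx with ⟨hxS, hxi⟩
    have := (hS ▸ hxS).1 i
    exact lt_of_le_of_ne this (Ne.symm (hxi i))
  -- measurable coordinates on the product
  have hm1 : ∀ i, Measurable fun p : (E n) × (E n) => p.1 i :=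
    fun i => (hmeas i).comp measurable_fst
  have hm2 : ∀ i, Measurable fun p : (E n) × (E n) => p.2 i :=
    fun i => (hmeas i).comp measurable_snd
  -- the good sets
  set Pos : Set ((E n) × (E n)) :=
    {p | (∀ i, 0 < p.1 i) ∧ (∀ i, 0 < p.2 i)} with hPos
  set D : Set ((E n) × (E n)) :=
    {p | ∀ i j, i ≠ j → p.1 i * p.2 j ≠ p.1 j * p.2 i} with hD
  set B : Equiv.Perm (Fin (n+1)) → Set ((E n) × (E n)) :=
    fun σ => Pos ∩ {p | ∀ k l, k < l → p.2 (σ k) * p.1 (σ l) < p.1 (σ k) * p.2 (σ l)} with hB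
  set G : Set ((E n) × (E n)) := Pos ∩ D with hG
  have hPosm : MeasurableSet Pos := by
    rw [hPos]
    have : {p : (E n) × (E n) | (∀ i, 0 < p.1 i) ∧ (∀ i, 0 < p.2 i)}
        = (⋂ i, {p : (E n) × (E n) | 0 < p.1 i}) ∩ ⋂ i, {p : (E n) × (E n) | 0 < p.2 i} := by
      ext p; simp [Set.mem_setOf_eq]
    rw [this]
    exact (MeasurableSet.iInter fun i => measurableSet_lt measurable_const (hm1 i)).inter
      (MeasurableSet.iInter fun i => measurableSet_lt measurable_const (hm2 i))
  have hDm : MeasurableSet D := by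
    rw [hD]
    have : D = ⋂ i, ⋂ j, {p : (E n) × (E n) | i ≠ j → p.1 i * p.2 j ≠ p.1 j * p.2 i} := by
      ext p; simp [hD, Set.mem_setOf_eq]
    rw [← hD, this]
    refine MeasurableSet.iInter fun i => MeasurableSet.iInter fun j => ?_
    by_cases h : i = j
    · simp [h]
    · have : {p : (E n) × (E n) | i ≠ j → p.1 i * p.2 j ≠ p.1 j * p.2 i}
          = {p : (E n) × (E n) | p.1 i * p.2 j = p.1 j * p.2 i}ᶜ := by
        ext p; simp [h]
      rw [this]
      exact (measurableSet_eq_fun ((hm1 i).mul (hm2 j)) ((hm1 j).mul (hm2 i))).compl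
  have hBm : ∀ σ, MeasurableSet (B σ) := by
    intro σ
    refine hPosm.inter ?_
    have : {p : (E n) × (E n) | ∀ k l, k < l → p.2 (σ k) * p.1 (σ l) < p.1 (σ k) * p.2 (σ l)}
        = ⋂ k, ⋂ l, {p : (E n) × (E n) | k < l → p.2 (σ k) * p.1 (σ l) < p.1 (σ k) * p.2 (σ l)} := by
      ext p; simp [Set.mem_setOf_eq]
    rw [this]
    refine MeasurableSet.iInter fun k => MeasurableSet.iInter fun l => ?_
    by_cases h : k < l
    · have : {p : (E n) × (E n) | k < l → p.2 (σ k) * p.1 (σ l) < p.1 (σ k) * p.2 (σ l)}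
          = {p : (E n) × (E n) | p.2 (σ k) * p.1 (σ l) < p.1 (σ k) * p.2 (σ l)} := by
        ext p; simp [h]
      rw [this]
      exact measurableSet_lt ((hm2 (σ k)).mul (hm1 (σ l))) ((hm1 (σ k)).mul (hm2 (σ l)))
    · simp [h]
  have hGm : MeasurableSet G := hPosm.inter hDm
  -- B σ ⊆ G
  have hBG : ∀ σ, B σ ⊆ G := by
    rintro σ p ⟨hp1, hp2⟩
    refine ⟨hp1, ?_⟩
    intro i j hij
    have hkl : σ.symm i ≠ σ.symm j := fun h => hij (by simpa using congrArg σ h)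
    rcases lt_or_gt_of_ne hkl with h | h
    · have := hp2 _ _ h
      rw [Equiv.apply_symm_apply, Equiv.apply_symm_apply] at this
      intro hEq; linarith
    · have := hp2 _ _ h
      rw [Equiv.apply_symm_apply, Equiv.apply_symm_apply] at this
      intro hEq; linarith
  -- G is covered by the B σ
  have hGB : G ⊆ ⋃ σ : Equiv.Perm (Fin (n+1)), B σ := by
    rintro p ⟨hp1, hp2⟩
    set r : Fin (n+1) → ℝ := fun i => p.2 i / p.1 i with hr
    have hrinj : Function.Injective r := by
      intro i j hijr
      by_contra hij
      have h1 := hp1.1 i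
      have h2 := hp1.1 j
      rw [hr] at hijr
      have : p.2 i * p.1 j = p.2 j * p.1 i := by
        field_simp at hijr
        linarith
      exact hp2 i j hij (by linarith)
    obtain ⟨σ, hσ⟩ := sort_exists r hrinj
    refine Set.mem_iUnion.2 ⟨σ, hp1, ?_⟩
    intro k l hkl
    have := hσ hkl
    simp only [Function.comp_apply, hr] at this
    rw [div_lt_div_iff₀ (hp1.1 _) (hp1.1 _)] at this
    linarith
  -- disjointness
  have hBdisj : ∀ σ τ : Equiv.Perm (Fin (n+1)), σ ≠ τ → Disjoint (B σ) (B τ) := by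
    intro σ τ hστ
    rw [Set.disjoint_left]
    rintro p hpσ hpτ
    have hpG := hBG σ hpσ
    set r : Fin (n+1) → ℝ := fun i => p.2 i / p.1 i with hr
    have hrinj : Function.Injective r := by
      intro i j hijr
      by_contra hij
      have h1 := hpG.1.1 i
      have h2 := hpG.1.1 j
      rw [hr] at hijr
      have : p.2 i * p.1 j = p.2 j * p.1 i := by
        field_simp at hijr
        linarith
      exact hpG.2 i j hij (by linarith)
    have hmono : ∀ ρ : Equiv.Perm (Fin (n+1)), p ∈ B ρ → StrictMono (r ∘ ρ) := by
      intro ρ hpρ k l hkl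
      have := hpρ.2 k l hkl
      simp only [Function.comp_apply, hr]
      rw [div_lt_div_iff₀ (hpρ.1.1 _) (hpρ.1.1 _)]
      linarith
    exact hστ (sort_unique r hrinj σ τ (hmono σ hpσ) (hmono τ hpτ))
  -- null pair sets
  have hpair : ∀ i j : Fin (n+1), i ≠ j →
      ν {p : (E n) × (E n) | p.1 i * p.2 j = p.1 j * p.2 i} = 0 := by
    intro i j hij
    have hAm : MeasurableSet {p : (E n) × (E n) | p.1 i * p.2 j = p.1 j * p.2 i} :=
      measurableSet_eq_fun ((hm1 i).mul (hm2 j)) ((hm1 j).mul (hm2 i))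
    rw [hν, Measure.prod_apply hAm]
    have hae : ∀ᵐ x ∂μ, x ∉ N := by
      rw [MeasureTheory.ae_iff]
      simpa using hN0
    have hslice : ∀ᵐ x ∂μ,
        μ (Prod.mk x ⁻¹' {p : (E n) × (E n) | p.1 i * p.2 j = p.1 j * p.2 i}) = 0 := by
      filter_upwards [hae] with x hx
      have hxi := hNpos x hx i
      have hxj := hNpos x hx j
      have hsm : MeasurableSet {y : E n | x i * y j = x j * y i} :=
        measurableSet_eq_fun ((hmeas j).const_mul _) ((hmeas i).const_mul _)
      have hpre : Prod.mk x ⁻¹' {p : (E n) × (E n) | p.1 i * p.2 j = p.1 j * p.2 i}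
          = {y : E n | x i * y j = x j * y i} := rfl
      rw [hpre, hμapp _ hsm]
      set g : (E n) →ₗ[ℝ] ℝ :=
        x i • EuclideanSpace.projₗ (𝕜 := ℝ) j - x j • EuclideanSpace.projₗ (𝕜 := ℝ) i with hg
      have hg_apply : ∀ y : E n, g y = x i * y j - x j * y i := by
        intro y
        rw [hg, LinearMap.sub_apply, LinearMap.smul_apply, LinearMap.smul_apply,
          smul_eq_mul, smul_eq_mul, hproj_apply, hproj_apply]
      have hZ : μH[(n : ℝ)] {y : E n | fsum y = u ∧ g y = 0} = 0 := by
        apply hyperplane_null _ _ _ _ (EuclideanSpace.single j 1) (EuclideanSpace.single i 1) _ hn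
        rw [hfsum_apply, hfsum_apply, hg_apply, hg_apply]
        simp only [EuclideanSpace.single_apply]
        rw [Finset.sum_ite_eq' Finset.univ j (fun _ => (1:ℝ)),
          Finset.sum_ite_eq' Finset.univ i (fun _ => (1:ℝ))]
        simp [hij, Ne.symm hij]
        intro hcon
        linarith
      have hsub : {y : E n | x i * y j = x j * y i} ∩ S ⊆ {y : E n | fsum y = u ∧ g y = 0} := by
        rintro y ⟨hy1, hy2⟩
        rw [hS] at hy2
        refine ⟨by rw [hfsum_apply]; exact hy2.2, by rw [hg_apply]; linarith [show x i * y j = x j * y i from hy1]⟩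
      rw [le_antisymm ((measure_mono hsub).trans hZ.le) zero_le, mul_zero]
    rw [lintegral_congr_ae hslice, lintegral_zero]
  -- marginal null sets
  have hfst : ν {p : (E n) × (E n) | p.1 ∈ N} = 0 := by
    have h : {p : (E n) × (E n) | p.1 ∈ N} = N ×ˢ Set.univ := by ext p; simp
    rw [hν, h, Measure.prod_prod, hN0, zero_mul]
  have hsnd : ν {p : (E n) × (E n) | p.2 ∈ N} = 0 := by
    have h : {p : (E n) × (E n) | p.2 ∈ N} = Set.univ ×ˢ N := by ext p; simp
    rw [hν, h, Measure.prod_prod, hN0, mul_zero]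
  -- G has full measure
  have hGc : ν Gᶜ = 0 := by
    have hsub : Gᶜ ⊆ ({p : (E n) × (E n) | p.1 ∈ N} ∪ {p : (E n) × (E n) | p.2 ∈ N}) ∪
        ⋃ (q : Fin (n+1) × Fin (n+1)), ⋃ (_ : q.1 ≠ q.2),
          {p : (E n) × (E n) | p.1 q.1 * p.2 q.2 = p.1 q.2 * p.2 q.1} := by
      intro p hp
      by_contra hcon
      simp only [Set.mem_union, Set.mem_iUnion, not_or, not_exists, Set.mem_setOf_eq] at hcon
      apply hp
      refine ⟨⟨fun i => hNpos _ hcon.1.1 i, fun i => hNpos _ hcon.1.2 i⟩, ?_⟩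
      intro i j hij
      exact hcon.2 (i, j) hij
    have hBadNull : ν (({p : (E n) × (E n) | p.1 ∈ N} ∪ {p : (E n) × (E n) | p.2 ∈ N}) ∪
        ⋃ (q : Fin (n+1) × Fin (n+1)), ⋃ (_ : q.1 ≠ q.2),
          {p : (E n) × (E n) | p.1 q.1 * p.2 q.2 = p.1 q.2 * p.2 q.1}) = 0 :=
      measure_union_null (measure_union_null hfst hsnd)
        (measure_iUnion_null fun q => measure_iUnion_null fun hq => hpair q.1 q.2 hq)
    exact measure_mono_null hsub hBadNull
  have hG1 : ν G = 1 := by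
    have h := measure_add_measure_compl (μ := ν) hGm
    rw [hGc, add_zero, measure_univ] at h
    exact h
  -- all B σ have the same measure
  have hBeq : ∀ σ : Equiv.Perm (Fin (n+1)), ν (B σ) = ν (B 1) := by
    intro σ
    have hmp : MeasurePreserving (Prod.map (permIso σ.symm) (permIso σ.symm)) ν ν := by
      rw [hν]
      exact (permIso_measurePreserving σ.symm u S hS hSm μ hμ).prod
        (permIso_measurePreserving σ.symm u S hS hSm μ hμ)
    have hpre : Prod.map (permIso σ.symm) (permIso σ.symm) ⁻¹' (B 1) = B σ := by
      ext p
      simp only [hB, hPos, Set.mem_preimage, Set.mem_inter_iff, Set.mem_setOf_eq, Prod.map,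
        Equiv.Perm.coe_one, id_eq]
      constructor
      · rintro ⟨⟨h1, h2⟩, h3⟩
        refine ⟨⟨fun i => ?_, fun i => ?_⟩, fun k l hkl => ?_⟩
        · have := h1 (σ.symm i)
          rwa [permIso_apply, Equiv.symm_symm, Equiv.apply_symm_apply] at this
        · have := h2 (σ.symm i)
          rwa [permIso_apply, Equiv.symm_symm, Equiv.apply_symm_apply] at this
        · have := h3 k l hkl
          rwa [permIso_apply, permIso_apply, permIso_apply, permIso_apply,
            Equiv.symm_symm] at this
      · rintro ⟨⟨h1, h2⟩, h3⟩
        refine ⟨⟨fun i => ?_, fun i => ?_⟩, fun k l hkl => ?_⟩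
        · rw [permIso_apply, Equiv.symm_symm]; exact h1 _
        · rw [permIso_apply, Equiv.symm_symm]; exact h2 _
        · rw [permIso_apply, permIso_apply, permIso_apply, permIso_apply, Equiv.symm_symm]
          exact h3 k l hkl
    rw [← hpre, hmp.measure_preimage (hBm 1).nullMeasurableSet]
  -- sum over permutations
  have hcover : (⋃ σ : Equiv.Perm (Fin (n+1)), B σ) = G :=
    Set.Subset.antisymm (Set.iUnion_subset hBG) hGB
  have hsum : ∑ σ : Equiv.Perm (Fin (n+1)), ν (B σ) = 1 := by
    rw [← tsum_fintype (L := SummationFilter.unconditional _), ← measure_iUnion (fun σ τ h => hBdisj σ τ h) hBm, hcover, hG1]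
  have hfact0 : ((n+1).factorial : ℝ≥0∞) ≠ 0 := by
    exact_mod_cast (n+1).factorial_ne_zero
  have hfactT : ((n+1).factorial : ℝ≥0∞) ≠ ∞ := ENNReal.natCast_ne_top _
  have hB1 : ν (B 1) = ((n+1).factorial : ℝ≥0∞)⁻¹ := by
    have hcard : ((n+1).factorial : ℝ≥0∞) * ν (B 1) = 1 := by
      rw [← hsum]
      calc ((n+1).factorial : ℝ≥0∞) * ν (B 1)
          = (Fintype.card (Equiv.Perm (Fin (n+1)))) * ν (B 1) := by
            rw [Fintype.card_perm, Fintype.card_fin]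
        _ = ∑ _σ : Equiv.Perm (Fin (n+1)), ν (B 1) := by
            rw [Finset.sum_const, Finset.card_univ, nsmul_eq_mul]
        _ = ∑ σ : Equiv.Perm (Fin (n+1)), ν (B σ) :=
            (Finset.sum_congr rfl fun σ _ => (hBeq σ).symm)
    have h2 := congrArg (fun z => ((n+1).factorial : ℝ≥0∞)⁻¹ * z) hcard
    rwa [← mul_assoc, ENNReal.inv_mul_cancel hfact0 hfactT, one_mul, mul_one] at h2
  -- reversal permutation
  have hrevne : (1 : Equiv.Perm (Fin (n+1))) ≠ Fin.revPerm := by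
    intro h
    have h0 := Equiv.ext_iff.1 h 0
    rw [Equiv.Perm.one_apply, Fin.revPerm_apply] at h0
    have : (0 : Fin (n+1)).val = (Fin.rev 0).val := congrArg Fin.val h0
    rw [Fin.val_rev] at this
    simp at this
    omega
  -- the event agrees with B 1 ∪ B rev on G
  have hEvG : {p : (E n) × (E n) |
        (∀ i j : Fin (n + 1), i < j → p.2 i * p.1 j ≤ p.1 i * p.2 j) ∨
        (∀ i j : Fin (n + 1), i < j → p.1 i * p.2 j ≤ p.2 i * p.1 j)} ∩ G
      = B 1 ∪ B Fin.revPerm := by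
    ext p
    constructor
    · rintro ⟨hpE, hpG⟩
      rcases hpE with h | h
      · left
        refine ⟨hpG.1, fun k l hkl => ?_⟩
        simp only [Equiv.Perm.coe_one, id_eq]
        refine lt_of_le_of_ne (h k l hkl) fun hEq => ?_
        exact hpG.2 k l (ne_of_lt hkl) (by linarith)
      · right
        refine ⟨hpG.1, fun k l hkl => ?_⟩
        simp only [Fin.revPerm_apply]
        have hlt : l.rev < k.rev := Fin.rev_lt_rev.2 hkl
        have hle := h l.rev k.rev hlt
        have hne : k.rev ≠ l.rev := fun hc => (ne_of_lt hkl) (Fin.rev_injective hc)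
        refine lt_of_le_of_ne (by linarith) fun hEq => ?_
        exact hpG.2 k.rev l.rev hne (by linarith)
    · rintro (hp | hp)
      · refine ⟨Or.inl fun i j hij => ?_, hBG 1 hp⟩
        have := hp.2 i j hij
        simp only [Equiv.Perm.coe_one, id_eq] at this
        exact this.le
      · refine ⟨Or.inr fun i j hij => ?_, hBG Fin.revPerm hp⟩
        have hlt : j.rev < i.rev := Fin.rev_lt_rev.2 hij
        have := hp.2 j.rev i.rev hlt
        simp only [Fin.revPerm_apply] at this
        rw [Fin.rev_rev, Fin.rev_rev] at this
        linarith
  -- conclusion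
  have hEvν : ν {p : (E n) × (E n) |
        (∀ i j : Fin (n + 1), i < j → p.2 i * p.1 j ≤ p.1 i * p.2 j) ∨
        (∀ i j : Fin (n + 1), i < j → p.1 i * p.2 j ≤ p.2 i * p.1 j)}
      = ν (B 1 ∪ B Fin.revPerm) := by
    rw [← hEvG]
    refine le_antisymm ?_ (measure_mono Set.inter_subset_left)
    calc ν {p : (E n) × (E n) |
        (∀ i j : Fin (n + 1), i < j → p.2 i * p.1 j ≤ p.1 i * p.2 j) ∨
        (∀ i j : Fin (n + 1), i < j → p.1 i * p.2 j ≤ p.2 i * p.1 j)}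
        ≤ ν (({p : (E n) × (E n) |
        (∀ i j : Fin (n + 1), i < j → p.2 i * p.1 j ≤ p.1 i * p.2 j) ∨
        (∀ i j : Fin (n + 1), i < j → p.1 i * p.2 j ≤ p.2 i * p.1 j)} ∩ G) ∪ Gᶜ) := by
          refine measure_mono fun p hp => ?_
          by_cases hG' : p ∈ G
          · exact Or.inl ⟨hp, hG'⟩
          · exact Or.inr hG'
      _ ≤ ν ({p : (E n) × (E n) |
        (∀ i j : Fin (n + 1), i < j → p.2 i * p.1 j ≤ p.1 i * p.2 j) ∨
        (∀ i j : Fin (n + 1), i < j → p.1 i * p.2 j ≤ p.2 i * p.1 j)} ∩ G) + ν Gᶜ :=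
          measure_union_le _ _
      _ = _ := by rw [hGc, add_zero]
  show ν _ = _
  rw [hEvν, measure_union ((hBdisj 1 Fin.revPerm hrevne)) (hBm _), hB1, hBeq Fin.revPerm, hB1]
  rw [div_eq_mul_inv, two_mul]
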